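/- Let n ≥ 2 and let f ∈ S_n be a Laurent polynomial with vanishing logarithmic Hessian whose logarithmic polar map L_f has generic rank n−k, where 1 ≤ k ≤ n−1. Then there exist k linearly independent vectors λ^{(1)}, …, λ^{(k)} ∈ ℤⁿ such that for every i ∈ {1,…,k} and every m ∈ {1,…,n} the Laurent polynomial identity Σ_{j=1}^{n} λ^{(i)}_j · θ_j(θ_m f) = 0 holds; equivalently, the diagonal vector fields X_i = Σ_j λ^{(i)}_j x_j ∂/∂x_j annihilate each component x_m f_{x_m} of L_f, so they are tangent to the fibers of L_f. -/

import Mathlib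

noncomputable section

/-- The ring of Laurent polynomials in `n` variables over `ℂ`:
`S_n = ℂ[x_1^{±1},…,x_n^{±1}]`, realized as the group algebra of `ℤⁿ`. -/
abbrev LaurentPoly (n : ℕ) := AddMonoidAlgebra ℂ (Fin n → ℤ)

/-- The `j`-th logarithmic derivative `θ_j f = x_j ∂f/∂x_j = Σ_I a_I I_j x^I`. -/
noncomputable def thetaDeriv {n : ℕ} (j : Fin n) (f : LaurentPoly n) : LaurentPoly n :=
  AddMonoidAlgebra.ofCoeff (Finsupp.sum (AddMonoidAlgebra.coeff f) fun I a => Finsupp.single I (a * (I j : ℂ)))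

/-- Evaluation of a Laurent polynomial at a point of the torus `(ℂ*)ⁿ`. -/
noncomputable def tEval {n : ℕ} (x : Fin n → ℂˣ) (f : LaurentPoly n) : ℂ :=
  Finsupp.sum (AddMonoidAlgebra.coeff f) fun I a => a * ∏ i, ((x i ^ I i : ℂˣ) : ℂ)

/-- The logarithmic Hessian matrix `Θf = ((θ_j θ_i f))_{i,j}` of `f`,
as a matrix of Laurent polynomials. -/
noncomputable def logHessian {n : ℕ} (f : LaurentPoly n) :
    Matrix (Fin n) (Fin n) (LaurentPoly n) :=
  Matrix.of fun i j => thetaDeriv j (thetaDeriv i f)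

/-- The logarithmic Hessian matrix of `f` evaluated at a point `x` of the torus. -/
noncomputable def logHessianAt {n : ℕ} (f : LaurentPoly n) (x : Fin n → ℂˣ) :
    Matrix (Fin n) (Fin n) ℂ :=
  Matrix.of fun i j => tEval x (thetaDeriv j (thetaDeriv i f))

/-- The pullback `ξ_A^* f` of a Laurent polynomial `f` by the monoidal map
`ξ_A(x) = (∏_j x_j^{a_{1j}}, …, ∏_j x_j^{a_{nj}})`; on exponents this is `I ↦ Aᵀ I`,
since `f(ξ_A x) = Σ_I a_I x^{Aᵀ I}`. -/
noncomputable def monoidalPullback {n : ℕ} (A : Matrix (Fin n) (Fin n) ℤ)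
    (f : LaurentPoly n) : LaurentPoly n :=
  AddMonoidAlgebra.ofCoeff (Finsupp.mapDomain (fun I => A.transpose.mulVec I) (AddMonoidAlgebra.coeff f))
open Matrix Polynomial

section Aux

lemma thetaDeriv_apply {n : ℕ} (j : Fin n) (f : LaurentPoly n) (E : Fin n → ℤ) :
    (thetaDeriv j f).coeff E = f.coeff E * (E j : ℂ) := by
  unfold thetaDeriv
  rw [AddMonoidAlgebra.coeff_ofCoeff, Finsupp.sum_apply]
  rw [Finsupp.sum]
  rw [Finset.sum_eq_single E]
  · simp [Finsupp.single_apply]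
  · intro b _ hb; simp [Finsupp.single_apply, hb]
  · intro h; simp [Finsupp.notMem_support_iff.mp h]

lemma theta2_apply {n : ℕ} (m j : Fin n) (f : LaurentPoly n) (E : Fin n → ℤ) :
    (thetaDeriv j (thetaDeriv m f)).coeff E = f.coeff E * (E m : ℂ) * (E j : ℂ) := by
  rw [thetaDeriv_apply, thetaDeriv_apply]

lemma tEval_eq_sum_support {n : ℕ} (x : Fin n → ℂˣ) (f : LaurentPoly n) (s : Finset (Fin n → ℤ))
    (hs : f.coeff.support ⊆ s) :
    tEval x f = ∑ I ∈ s, f.coeff I * ∏ i, ((x i ^ I i : ℂˣ) : ℂ) := by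
  unfold tEval
  rw [Finsupp.sum]
  exact Finset.sum_subset hs (fun I _ hI => by simp [Finsupp.notMem_support_iff.mp hI])

lemma tEval_theta2 {n : ℕ} (x : Fin n → ℂˣ) (m j : Fin n) (f : LaurentPoly n) :
    tEval x (thetaDeriv j (thetaDeriv m f))
      = ∑ I ∈ f.coeff.support, f.coeff I * (I m : ℂ) * (I j : ℂ) * ∏ i, ((x i ^ I i : ℂˣ) : ℂ) := by
  rw [tEval_eq_sum_support x _ f.coeff.support]
  · apply Finset.sum_congr rfl; intro I _; rw [theta2_apply]
  · intro I hI
    rw [Finsupp.mem_support_iff] at hI ⊢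
    rw [theta2_apply] at hI
    intro h; exact hI (by simp [h])

lemma sum_smul_theta2_eq_zero {n : ℕ} (f : LaurentPoly n) (lam : Fin n → ℤ)
    (h : ∀ E ∈ f.coeff.support, ∑ j, lam j * E j = 0) (m : Fin n) :
    (∑ j : Fin n, (lam j : ℂ) • thetaDeriv j (thetaDeriv m f)) = 0 := by
  ext E
  rw [AddMonoidAlgebra.coeff_sum, Finset.sum_apply']
  have hterm : ∀ k : Fin n, ((lam k : ℂ) • thetaDeriv k (thetaDeriv m f)).coeff E
      = (lam k : ℂ) * (f.coeff E * (E m : ℂ) * (E k : ℂ)) := by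
    intro k
    rw [AddMonoidAlgebra.coeff_smul, Finsupp.smul_apply, theta2_apply, smul_eq_mul]
  rw [Finset.sum_congr rfl (fun k _ => hterm k)]
  by_cases hE : f.coeff E = 0
  · simp [hE]
  · have h0 : ∑ j, lam j * E j = 0 := h E (Finsupp.mem_support_iff.mpr hE)
    have heq : ∑ j : Fin n, (lam j : ℂ) * (f.coeff E * (E m : ℂ) * (E j : ℂ))
        = f.coeff E * (E m : ℂ) * ((∑ j, lam j * E j : ℤ) : ℂ) := by
      push_cast
      rw [Finset.mul_sum]
      exact Finset.sum_congr rfl (fun j _ => by ring)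
    rw [heq, h0]
    simp

/-- Auxiliary polynomial `∑ j, v j • X^j`. -/
private def wpoly {n : ℕ} (v : Fin n → ℤ) : Polynomial ℤ :=
  ∑ j : Fin n, Polynomial.C (v j) * Polynomial.X ^ (j : ℕ)

private lemma wpoly_coeff {n : ℕ} (v : Fin n → ℤ) (j₀ : Fin n) :
    (wpoly v).coeff (j₀ : ℕ) = v j₀ := by
  unfold wpoly
  rw [Polynomial.finset_sum_coeff]
  rw [Finset.sum_eq_single j₀]
  · simp
  · intro b _ hb
    rw [Polynomial.coeff_C_mul, Polynomial.coeff_X_pow,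
      if_neg (fun h => hb (Fin.val_injective h.symm))]
    simp
  · simp

private lemma wpoly_ne_zero {n : ℕ} (v : Fin n → ℤ) (hv : v ≠ 0) : wpoly v ≠ 0 := by
  obtain ⟨j₀, hj₀⟩ : ∃ j₀, v j₀ ≠ 0 := by
    by_contra h; push_neg at h; exact hv (funext h)
  intro h
  apply hj₀
  have := wpoly_coeff v j₀
  rw [h] at this
  simpa using this.symm

private lemma wpoly_eval {n : ℕ} (v : Fin n → ℤ) (q : ℤ) :
    (wpoly v).eval q = ∑ j : Fin n, v j * q ^ (j : ℕ) := by
  unfold wpoly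
  rw [Polynomial.eval_finset_sum]
  simp

lemma exists_generic_weight {n : ℕ} (P : Finset (Fin n → ℤ)) :
    ∃ w : Fin n → ℤ, Set.InjOn (fun I : Fin n → ℤ => ∑ j, w j * I j) (P : Set (Fin n → ℤ)) := by
  classical
  set bad : Finset ℤ :=
    (P ×ˢ P).biUnion (fun p => (wpoly (p.1 - p.2)).roots.toFinset) with hbad
  obtain ⟨q, hq⟩ := Infinite.exists_notMem_finset bad
  refine ⟨fun j => q ^ (j : ℕ), ?_⟩
  intro I hI I' hI' heq
  by_contra hne
  have hv : I - I' ≠ 0 := sub_ne_zero_of_ne hne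
  have hroot : (wpoly (I - I')).eval q = 0 := by
    rw [wpoly_eval]
    simp only at heq
    have : ∑ j : Fin n, (I - I') j * q ^ (j : ℕ)
        = (∑ j : Fin n, q ^ (j : ℕ) * I j) - ∑ j : Fin n, q ^ (j : ℕ) * I' j := by
      rw [← Finset.sum_sub_distrib]
      exact Finset.sum_congr rfl (fun j _ => by simp [Pi.sub_apply]; ring)
    rw [this, heq, sub_self]
  apply hq
  rw [hbad]
  apply Finset.mem_biUnion.mpr
  refine ⟨(I, I'), Finset.mem_product.mpr ⟨hI, hI'⟩, ?_⟩
  rw [Multiset.mem_toFinset, Polynomial.mem_roots (wpoly_ne_zero _ hv)]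
  exact hroot

lemma exists_good_columns {r n : ℕ} (v' : Fin r → (Fin n → ℚ))
    (hv : LinearIndependent ℚ v') :
    ∃ R : Fin r → Fin n, (Matrix.of fun i j => v' i (R j)).det ≠ 0 := by
  classical
  set A : Matrix (Fin r) (Fin n) ℚ := Matrix.of (fun i j => v' i j) with hA
  have hvlin := Fintype.linearIndependent_iff.mp hv
  -- Aᵀ.mulVecLin is injective
  have hker : LinearMap.ker Aᵀ.mulVecLin = ⊥ := by
    rw [LinearMap.ker_eq_bot']
    intro y hy
    have hs : (∑ j, y j • v' j) = 0 := by
      funext m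
      have h1 := congrFun hy m
      simp only [Matrix.mulVecLin_apply, Matrix.mulVec, dotProduct,
        Matrix.transpose_apply, Pi.zero_apply, hA, Matrix.of_apply] at h1
      calc (∑ j, y j • v' j) m = ∑ j, v' j m * y j := by
            simp [mul_comm]
      _ = 0 := h1
    funext i
    exact hvlin y hs i
  have hrankT : Aᵀ.rank = r := by
    have h := Aᵀ.mulVecLin.finrank_range_add_finrank_ker
    rw [hker, finrank_bot] at h
    simp only [add_zero] at h
    rw [Matrix.rank]
    rw [h]
    simp [Module.finrank_pi]
  have hrankA : A.rank = r := by rw [← Matrix.rank_transpose, hrankT]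
  have hspan : Submodule.span ℚ (Set.range Aᵀ) = ⊤ := by
    apply Submodule.eq_top_of_finrank_eq
    have := A.rank_eq_finrank_span_cols
    rw [hrankA] at this
    change r = Module.finrank ℚ (Submodule.span ℚ (Set.range Aᵀ)) at this
    rw [← this]
    simp [Module.finrank_pi]
  obtain ⟨b, hbsub, hbspan, hbindep⟩ := exists_linearIndependent ℚ (Set.range Aᵀ)
  rw [hspan] at hbspan
  have hbfin : b.Finite := Set.Finite.subset (Set.finite_range Aᵀ) hbsub
  haveI : Fintype b := hbfin.fintype
  have hbbasis : Module.Basis b ℚ (Fin r → ℚ) := Module.Basis.mk hbindep (by rw [Subtype.range_coe, hbspan])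
  have hbcard : Fintype.card b = r := by
    have := Module.finrank_eq_card_basis hbbasis
    simp only [Module.finrank_fin_fun] at this
    omega
  obtain ⟨e⟩ : Nonempty (Fin r ≃ b) := ⟨(Fintype.equivFinOfCardEq hbcard).symm⟩
  have hchoice : ∀ j : Fin r, ∃ m : Fin n, Aᵀ m = (e j : Fin r → ℚ) := by
    intro j
    have : ((e j : b) : Fin r → ℚ) ∈ Set.range Aᵀ := hbsub (e j).2
    obtain ⟨m, hm⟩ := this
    exact ⟨m, hm⟩
  choose R hR using hchoice
  refine ⟨R, ?_⟩
  set B : Matrix (Fin r) (Fin r) ℚ := Matrix.of (fun i j => v' i (R j)) with hB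
  -- columns of B are the basis vectors e j
  have hcol : ∀ j i, B i j = (e j : Fin r → ℚ) i := by
    intro j i
    rw [← hR j]
    simp [hB, hA]
  have hcols_indep : LinearIndependent ℚ (fun j : Fin r => ((e j : b) : Fin r → ℚ)) :=
    hbindep.comp e e.injective
  intro hdet
  obtain ⟨c, hc0, hcv⟩ := Matrix.exists_mulVec_eq_zero_iff.mpr hdet
  apply hc0
  rw [Fintype.linearIndependent_iff] at hcols_indep
  have hs : (∑ j', c j' • ((e j' : b) : Fin r → ℚ)) = 0 := by
    funext i
    have h1 := congrFun hcv i
    simp only [Matrix.mulVec, dotProduct, Pi.zero_apply] at h1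
    calc (∑ j', c j' • ((e j' : b) : Fin r → ℚ)) i = ∑ j', c j' * B i j' := by
          simp [hcol]
    _ = ∑ j', B i j' * c j' := Finset.sum_congr rfl (fun _ _ => mul_comm _ _)
    _ = 0 := h1
  funext j
  exact hcols_indep c hs j

lemma det_poly_expand {n r : ℕ} (P : Finset (Fin n → ℤ)) (a : (Fin n → ℤ) → ℂ)
    (e : (Fin n → ℤ) → ℕ) (R : Fin r → Fin n) :
    (Matrix.of fun i j : Fin r =>
        ∑ I ∈ P, C (a I * (I (R i) : ℂ) * (I (R j) : ℂ)) * X ^ e I).det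
      = ∑ φ ∈ Fintype.piFinset (fun _ : Fin r => P),
          C ((∏ i, (a (φ i) * ((φ i) (R i) : ℂ)))
              * (Matrix.of fun i j : Fin r => (((φ i) (R j)) : ℂ)).det)
            * X ^ (∑ i, e (φ i)) := by
  classical
  set F := (Matrix.detRowAlternating :
      (Fin r → ℂ[X]) [⋀^Fin r]→ₗ[ℂ[X]] ℂ[X]).toMultilinearMap with hF
  set w : (Fin n → ℤ) → (Fin r → ℂ[X]) := fun I j => C ((I (R j) : ℂ)) with hw
  set c : Fin r → (Fin n → ℤ) → ℂ[X] := fun i I => C (a I * (I (R i) : ℂ)) * X ^ e I with hc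
  have hrow : (Matrix.of fun i j : Fin r =>
      ∑ I ∈ P, C (a I * (I (R i) : ℂ) * (I (R j) : ℂ)) * X ^ e I)
      = fun i => ∑ I ∈ P, c i I • w I := by
    funext i j
    rw [Finset.sum_apply]
    apply Finset.sum_congr rfl
    intro I _
    simp only [Matrix.of_apply, hc, hw, smul_eq_mul, Pi.smul_apply]
    rw [C_mul, C_mul]
    ring
  have hdet : (Matrix.of fun i j : Fin r =>
      ∑ I ∈ P, C (a I * (I (R i) : ℂ) * (I (R j) : ℂ)) * X ^ e I).det
      = F (fun i => ∑ I ∈ P, c i I • w I) := by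
    rw [← hrow]; rfl
  rw [hdet, MultilinearMap.map_sum_finset F (fun i I => c i I • w I) (fun _ => P)]
  apply Finset.sum_congr rfl
  intro φ hφ
  rw [MultilinearMap.map_smul_univ]
  have hFw : F (fun i => w (φ i)) = C ((Matrix.of fun i j : Fin r => (((φ i) (R j)) : ℂ)).det) := by
    have : F (fun i => w (φ i))
        = ((Matrix.of fun i j : Fin r => (((φ i) (R j)) : ℂ)).map (C : ℂ →+* ℂ[X])).det := rfl
    rw [this]
    exact (RingHom.map_det (C : ℂ →+* ℂ[X]) _).symm
  rw [hFw]
  have hprod : (∏ i, c i (φ i)) = C (∏ i, (a (φ i) * ((φ i) (R i) : ℂ))) * X ^ (∑ i, e (φ i)) := by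
    simp only [hc]
    rw [Finset.prod_mul_distrib, ← map_prod, Finset.prod_pow_eq_pow_sum]
  rw [hprod, smul_eq_mul, C_mul]
  ring

open Polynomial in
lemma det_poly_ne_zero {n r : ℕ} (P : Finset (Fin n → ℤ)) (a : (Fin n → ℤ) → ℂ)
    (ha : ∀ I ∈ P, a I ≠ 0) (e : (Fin n → ℤ) → ℕ) (R : Fin r → Fin n)
    (v : Fin r → (Fin n → ℤ)) (hv : ∀ i, v i ∈ P) (hvinj : Function.Injective v)
    (hdetv : (Matrix.of fun i j : Fin r => ((v i (R j) : ℤ) : ℂ)).det ≠ 0)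
    (hkey : ∀ φ : Fin r → (Fin n → ℤ), (∀ i, φ i ∈ P) →
      (Matrix.of fun i j : Fin r => ((φ i (R j) : ℤ) : ℂ)).det ≠ 0 →
      (∑ i, e (φ i)) = (∑ i, e (v i)) → ∃ σ : Equiv.Perm (Fin r), φ = v ∘ σ) :
    (Matrix.of fun i j : Fin r =>
        ∑ I ∈ P, C (a I * (I (R i) : ℂ) * (I (R j) : ℂ)) * X ^ e I).det
      ≠ 0 := by
  classical
  intro hzero
  rw [det_poly_expand] at hzero
  set Bc : Matrix (Fin r) (Fin r) ℂ := Matrix.of (fun i j : Fin r => ((v i (R j) : ℤ) : ℂ))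
    with hBc
  set m₀ : ℕ := ∑ i, e (v i) with hm₀
  set D : (Fin r → (Fin n → ℤ)) → ℂ :=
    fun φ => (Matrix.of fun i j : Fin r => (((φ i) (R j)) : ℂ)).det with hD
  set G : (Fin r → (Fin n → ℤ)) → ℂ :=
    fun φ => if m₀ = ∑ i, e (φ i) then (∏ i, (a (φ i) * ((φ i) (R i) : ℂ))) * D φ else 0
    with hG
  have hterm : ∀ φ : Fin r → (Fin n → ℤ),
      (C ((∏ i, (a (φ i) * ((φ i) (R i) : ℂ))) * D φ) * X ^ (∑ i, e (φ i))).coeff m₀ = G φ := by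
    intro φ
    rw [coeff_C_mul, coeff_X_pow]
    simp only [hG]
    by_cases h : m₀ = ∑ i, e (φ i)
    · rw [if_pos h, if_pos h, mul_one]
    · rw [if_neg h, if_neg h, mul_zero]
  have hcoeff : ∑ φ ∈ Fintype.piFinset (fun _ : Fin r => P), G φ = 0 := by
    have h := congrArg (fun p => Polynomial.coeff p m₀) hzero
    simp only [Polynomial.coeff_zero] at h
    rw [Polynomial.finset_sum_coeff] at h
    rw [← h]
    exact Finset.sum_congr rfl (fun φ _ => (hterm φ).symm)
  set T : Finset (Fin r → (Fin n → ℤ)) :=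
    Finset.image (fun σ : Equiv.Perm (Fin r) => v ∘ σ) Finset.univ with hT
  have hTsub : T ⊆ Fintype.piFinset (fun _ : Fin r => P) := by
    intro φ hφ
    rw [hT, Finset.mem_image] at hφ
    obtain ⟨σ, _, rfl⟩ := hφ
    exact Fintype.mem_piFinset.mpr (fun i => hv (σ i))
  have hsumT : ∑ φ ∈ T, G φ = 0 := by
    rw [← hcoeff]
    apply Finset.sum_subset hTsub
    intro φ hφP hφT
    by_contra hGφ
    have hcond : m₀ = ∑ i, e (φ i) := by
      by_contra h; exact hGφ (by rw [hG]; simp only [if_neg h])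
    have hDφ : D φ ≠ 0 := by
      intro h
      apply hGφ
      rw [hG]; simp only [if_pos hcond, h, mul_zero]
    obtain ⟨σ, rfl⟩ := hkey φ (fun i => Fintype.mem_piFinset.mp hφP i) hDφ hcond.symm
    exact hφT (Finset.mem_image.mpr ⟨σ, Finset.mem_univ σ, rfl⟩)
  have hinj : Function.Injective (fun σ : Equiv.Perm (Fin r) => v ∘ σ) := by
    intro σ σ' h
    exact Equiv.ext (fun i => hvinj (congrFun h i))
  rw [Finset.sum_image (fun σ _ σ' _ h => hinj h)] at hsumT
  have hGv : ∀ σ : Equiv.Perm (Fin r), G (v ∘ σ)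
      = ((∏ i, a (v i)) * Bc.det) * (((Equiv.Perm.sign σ : ℤ) : ℂ) * ∏ i, Bc (σ i) i) := by
    intro σ
    have hcond : m₀ = ∑ i, e ((v ∘ σ) i) := by
      rw [hm₀]
      exact (Equiv.sum_comp σ (fun i => e (v i))).symm
    rw [hG]
    simp only [if_pos hcond]
    have hDperm : D (v ∘ σ) = ((Equiv.Perm.sign σ : ℤ) : ℂ) * Bc.det := by
      have : D (v ∘ σ) = (Bc.submatrix σ id).det := rfl
      rw [this, Matrix.det_permute]
    have hsplit : (∏ i, (a ((v ∘ σ) i) * (((v ∘ σ) i) (R i) : ℂ)))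
        = (∏ i, a (v i)) * ∏ i, Bc (σ i) i := by
      rw [Finset.prod_mul_distrib]
      congr 1
      exact Equiv.prod_comp σ (fun i => a (v i))
    rw [hDperm, hsplit]
    ring
  rw [Finset.sum_congr rfl (fun σ _ => hGv σ), ← Finset.mul_sum] at hsumT
  have hdetsum : ∑ σ : Equiv.Perm (Fin r), (((Equiv.Perm.sign σ : ℤ) : ℂ) * ∏ i, Bc (σ i) i)
      = Bc.det := (Matrix.det_apply' Bc).symm
  rw [hdetsum] at hsumT
  have h1 : (∏ i, a (v i)) ≠ 0 := Finset.prod_ne_zero_iff.mpr (fun i _ => ha (v i) (hv i))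
  exact (mul_ne_zero (mul_ne_zero h1 hdetv) hdetv) hsumT

section Exchange

variable {K : Type*} {V : Type*} [Field K] [AddCommGroup V] [Module K V] [DecidableEq V]

lemma indep_not_mem_span_erase {s : Finset V}
    (hs : LinearIndependent K ((↑) : ↥(↑s : Set V) → V)) {e : V} (he : e ∈ s) :
    e ∉ Submodule.span K ((s.erase e : Finset V) : Set V) := by
  have hne : e ∉ ((s.erase e : Finset V) : Set V) := by simp
  have hins : (insert e ((s.erase e : Finset V) : Set V)) = (↑s : Set V) := by
    rw [← Finset.coe_insert, Finset.insert_erase he]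
  have := (linearIndepOn_id_insert hne).mp (by rw [hins]; exact hs)
  exact this.2

lemma finset_exchange {s t : Finset V}
    (hs : LinearIndependent K ((↑) : ↥(↑s : Set V) → V))
    (ht : LinearIndependent K ((↑) : ↥(↑t : Set V) → V))
    (hcard : s.card = t.card) {e : V} (hes : e ∈ s) (het : e ∉ t) :
    ∃ e' ∈ t, e' ∉ s ∧
      LinearIndependent K ((↑) : ((insert e (t.erase e') : Finset V) : Set V) → V) := by
  have hts : (t \ s).Nonempty := by
    rw [Finset.sdiff_nonempty]
    intro hsub
    have : t = s := Finset.eq_of_subset_of_card_le hsub (le_of_eq hcard)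
    exact het (this ▸ hes)
  have insert_indep : ∀ e' ∈ t, e ∉ Submodule.span K ((t.erase e' : Finset V) : Set V) →
      LinearIndependent K ((↑) : ((insert e (t.erase e') : Finset V) : Set V) → V) := by
    intro e' _ hnotspan
    have hne : e ∉ ((t.erase e' : Finset V) : Set V) := by
      simp only [Finset.coe_erase, Set.mem_diff, Finset.mem_coe]
      intro h; exact het h.1
    rw [Finset.coe_insert]
    exact (linearIndepOn_id_insert hne).mpr
      ⟨LinearIndepOn.mono (v := id) ht (by exact_mod_cast Finset.erase_subset e' t), hnotspan⟩
  by_cases hsp : e ∈ Submodule.span K (↑t : Set V)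
  · -- e = ∑_{x ∈ t} c x • x
    obtain ⟨c, -, hc⟩ := Submodule.mem_span_finset.mp hsp
    -- find x₀ ∈ t \ s with c x₀ ≠ 0
    have hx0 : ∃ x₀ ∈ t, x₀ ∉ s ∧ c x₀ ≠ 0 := by
      by_contra hcon
      push_neg at hcon
      have hzero : ∀ x ∈ t, x ∉ s → c x = 0 := hcon
      have hmem : (∑ i ∈ t, c i • i) ∈ Submodule.span K ((s.erase e : Finset V) : Set V) := by
        apply Submodule.sum_mem
        intro x hx
        by_cases hxs : x ∈ s
        · have hxe : x ∈ s.erase e := Finset.mem_erase.mpr ⟨fun h => het (h ▸ hx), hxs⟩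
          exact Submodule.smul_mem _ _ (Submodule.subset_span (by exact_mod_cast hxe))
        · rw [hzero x hx hxs, zero_smul]; exact Submodule.zero_mem _
      rw [hc] at hmem
      exact indep_not_mem_span_erase hs hes hmem
    obtain ⟨x₀, hx₀t, hx₀s, hcx₀⟩ := hx0
    refine ⟨x₀, hx₀t, hx₀s, insert_indep x₀ hx₀t ?_⟩
    intro hespan
    -- then x₀ ∈ span (t.erase x₀), contradiction
    have hsum : c x₀ • x₀ + ∑ x ∈ t.erase x₀, c x • x = e := by
      rw [Finset.add_sum_erase t (fun x => c x • x) hx₀t]; exact hc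
    have hmem1 : c x₀ • x₀ ∈ Submodule.span K ((t.erase x₀ : Finset V) : Set V) := by
      have heq : c x₀ • x₀ = e - ∑ x ∈ t.erase x₀, c x • x := eq_sub_of_add_eq hsum
      rw [heq]
      apply Submodule.sub_mem _ hespan
      exact Submodule.sum_mem _ (fun x hx =>
        Submodule.smul_mem _ _ (Submodule.subset_span (by exact_mod_cast hx)))
    have hmem2 : x₀ ∈ Submodule.span K ((t.erase x₀ : Finset V) : Set V) := by
      have := Submodule.smul_mem _ (c x₀)⁻¹ hmem1
      rwa [inv_smul_smul₀ hcx₀] at this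
    exact indep_not_mem_span_erase ht hx₀t hmem2
  · obtain ⟨e', he'⟩ := hts
    rw [Finset.mem_sdiff] at he'
    refine ⟨e', he'.1, he'.2, insert_indep e' he'.1 ?_⟩
    intro h
    exact hsp (Submodule.span_mono (by exact_mod_cast Finset.erase_subset e' t) h)

open Finset in
lemma exists_max_weight_indep (Q : Finset V) (r : ℕ) (ω : V → ℚ) (hω : Set.InjOn ω Q)
    (hex : ∃ s ⊆ Q, s.card = r ∧ LinearIndependent K ((↑) : ↥(↑s : Set V) → V)) :
    ∃ s ⊆ Q, s.card = r ∧ LinearIndependent K ((↑) : ↥(↑s : Set V) → V) ∧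
      ∀ t ⊆ Q, t.card = r → LinearIndependent K ((↑) : ↥(↑t : Set V) → V) → t ≠ s →
        ∑ x ∈ t, ω x < ∑ x ∈ s, ω x := by
  classical
  set C : Finset (Finset V) :=
    Q.powerset.filter (fun s => s.card = r ∧ LinearIndependent K ((↑) : ↥(↑s : Set V) → V))
    with hC
  have hmemC : ∀ s : Finset V, s ∈ C ↔
      s ⊆ Q ∧ s.card = r ∧ LinearIndependent K ((↑) : ↥(↑s : Set V) → V) := by
    intro s; simp [hC, Finset.mem_filter, Finset.mem_powerset, and_assoc]
  obtain ⟨s₀, hs₀Q, hs₀c, hs₀i⟩ := hex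
  have hCne : C.Nonempty := ⟨s₀, (hmemC s₀).mpr ⟨hs₀Q, hs₀c, hs₀i⟩⟩
  obtain ⟨s, hsC, hsmax⟩ := C.exists_max_image (fun s => ∑ x ∈ s, ω x) hCne
  obtain ⟨hsQ, hsc, hsi⟩ := (hmemC s).mp hsC
  refine ⟨s, hsQ, hsc, hsi, ?_⟩
  intro t htQ htc hti hne
  -- symmetric difference is nonempty
  have hdne : ((s \ t) ∪ (t \ s)).Nonempty := by
    rw [Finset.nonempty_iff_ne_empty]
    intro hemp
    rw [Finset.union_eq_empty, Finset.sdiff_eq_empty_iff_subset,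
      Finset.sdiff_eq_empty_iff_subset] at hemp
    exact hne (Finset.Subset.antisymm hemp.2 hemp.1)
  obtain ⟨e, heu, hemax⟩ := ((s \ t) ∪ (t \ s)).exists_max_image ω hdne
  have hcard' : t.card = s.card := htc.trans hsc.symm
  have key : ∀ u : V, u ∈ (s \ t) ∪ (t \ s) → u ≠ e → ω u < ω e := by
    intro u hu hune
    have h1 : ω u ≤ ω e := hemax u hu
    rcases h1.lt_or_eq with h | h
    · exact h
    · exfalso
      have huQ : u ∈ Q := by
        rcases Finset.mem_union.mp hu with h' | h'
        · exact hsQ (Finset.mem_sdiff.mp h').1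
        · exact htQ (Finset.mem_sdiff.mp h').1
      have heQ : e ∈ Q := by
        rcases Finset.mem_union.mp heu with h' | h'
        · exact hsQ (Finset.mem_sdiff.mp h').1
        · exact htQ (Finset.mem_sdiff.mp h').1
      exact hune (hω huQ heQ h)
  rcases Finset.mem_union.mp heu with hest | hets
  · -- e ∈ s \ t : exchange into t, improving t but still ≤ max = sum s
    obtain ⟨hes, het⟩ := Finset.mem_sdiff.mp hest
    obtain ⟨e', he't, he's, hind⟩ := finset_exchange hsi hti hcard'.symm hes het
    have he'ne : e' ≠ e := fun h => het (h ▸ he't)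
    have hlt : ω e' < ω e :=
      key e' (Finset.mem_union.mpr (Or.inr (Finset.mem_sdiff.mpr ⟨he't, he's⟩))) he'ne
    set t' := insert e (t.erase e') with ht'
    have henot : e ∉ t.erase e' := fun h => het (Finset.mem_of_mem_erase h)
    have ht'Q : t' ⊆ Q := by
      intro x hx
      rcases Finset.mem_insert.mp hx with h | h
      · exact hsQ (h ▸ hes)
      · exact htQ (Finset.mem_of_mem_erase h)
    have ht'c : t'.card = r := by
      rw [ht', Finset.card_insert_of_notMem henot, Finset.card_erase_of_mem he't, htc]
      have : 1 ≤ r := htc ▸ Finset.card_pos.mpr ⟨e', he't⟩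
      omega
    have ht'C : t' ∈ C := (hmemC t').mpr ⟨ht'Q, ht'c, hind⟩
    have hsum_t' : ∑ x ∈ t', ω x = ∑ x ∈ t, ω x - ω e' + ω e := by
      rw [ht', Finset.sum_insert henot]
      have := Finset.add_sum_erase t ω he't
      rw [← this]; ring
    have hle := hsmax t' ht'C
    rw [hsum_t'] at hle
    linarith
  · -- e ∈ t \ s : exchange into s, improving s: contradiction with maximality
    obtain ⟨het, hes⟩ := Finset.mem_sdiff.mp hets
    obtain ⟨e', he's, he't, hind⟩ := finset_exchange hti hsi hcard' het hes
    have he'ne : e' ≠ e := fun h => hes (h ▸ he's)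
    have hlt : ω e' < ω e :=
      key e' (Finset.mem_union.mpr (Or.inl (Finset.mem_sdiff.mpr ⟨he's, he't⟩))) he'ne
    set s' := insert e (s.erase e') with hs'
    have henot : e ∉ s.erase e' := fun h => hes (Finset.mem_of_mem_erase h)
    have hs'Q : s' ⊆ Q := by
      intro x hx
      rcases Finset.mem_insert.mp hx with h | h
      · exact htQ (h ▸ het)
      · exact hsQ (Finset.mem_of_mem_erase h)
    have hs'c : s'.card = r := by
      rw [hs', Finset.card_insert_of_notMem henot, Finset.card_erase_of_mem he's, hsc]
      have : 1 ≤ r := hsc ▸ Finset.card_pos.mpr ⟨e', he's⟩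
      omega
    have hs'C : s' ∈ C := (hmemC s').mpr ⟨hs'Q, hs'c, hind⟩
    have hsum_s' : ∑ x ∈ s', ω x = ∑ x ∈ s, ω x - ω e' + ω e := by
      rw [hs', Finset.sum_insert henot]
      have := Finset.add_sum_erase s ω he's
      rw [← this]; ring
    have hle := hsmax s' hs'C
    rw [hsum_s'] at hle
    linarith


end Exchange

end Aux

section Curve

lemma prod_zpow_eq_zpow_sum {G : Type*} [CommGroup G] (t : G) {ι : Type*} (s : Finset ι)
    (c : ι → ℤ) : ∏ i ∈ s, t ^ c i = t ^ (∑ i ∈ s, c i) := by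
  classical
  induction s using Finset.cons_induction with
  | empty => simp
  | cons a s ha ih => rw [Finset.prod_cons, Finset.sum_cons, ih, ← _root_.zpow_add]

lemma tEval_theta2_curve {n : ℕ} (f : LaurentPoly n) (w : Fin n → ℤ) (t : ℂˣ) (m j : Fin n) :
    tEval (fun i => t ^ w i) (thetaDeriv j (thetaDeriv m f))
      = ∑ I ∈ f.coeff.support, f.coeff I * (I m : ℂ) * (I j : ℂ) * ((t : ℂ) ^ (∑ l, w l * I l)) := by
  rw [tEval_theta2]
  refine Finset.sum_congr rfl (fun I _ => ?_)
  congr 1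
  have hu : (∏ i, (t ^ w i) ^ I i) = t ^ (∑ l, w l * I l) := by
    have h1 : ∀ i : Fin n, (t ^ w i) ^ I i = t ^ (w i * I i) := fun i => (zpow_mul t (w i) (I i)).symm
    rw [Finset.prod_congr rfl (fun i _ => h1 i), prod_zpow_eq_zpow_sum]
  calc (∏ i, (((t ^ w i) ^ I i : ℂˣ) : ℂ)) = ((∏ i, ((t ^ w i) ^ I i) : ℂˣ) : ℂ) :=
        (map_prod (Units.coeHom ℂ) (fun i => (t ^ w i) ^ I i) Finset.univ).symm
  _ = ((t ^ (∑ l, w l * I l) : ℂˣ) : ℂ) := by rw [hu]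
  _ = (t : ℂ) ^ (∑ l, w l * I l) := by
        rw [Units.val_zpow_eq_zpow_val]

lemma rank_ge_of_submatrix {N r : ℕ} (M : Matrix (Fin N) (Fin N) ℂ) (R : Fin r → Fin N)
    (h : (M.submatrix R R).det ≠ 0) : r ≤ M.rank := by
  classical
  have hunit : IsUnit (M.submatrix R R) :=
    (Matrix.isUnit_iff_isUnit_det _).mpr (isUnit_iff_ne_zero.mpr h)
  have h1 : (M.submatrix R R).rank = r := by
    rw [Matrix.rank_of_isUnit _ hunit, Fintype.card_fin]
  set O : Matrix (Fin N) (Fin r) ℂ := Matrix.of (fun m j => if m = R j then 1 else 0) with hO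
  have hfact : M.submatrix R R = (M.submatrix R id) * O := by
    ext i j
    rw [Matrix.mul_apply]
    rw [Finset.sum_eq_single (R j)]
    · simp [hO]
    · intro b _ hb; simp [hO, hb]
    · simp
  have h2 : (M.submatrix R R).rank ≤ (M.submatrix R id).rank := by
    rw [hfact]; exact Matrix.rank_mul_le_left _ _
  set Q : Matrix (Fin r) (Fin N) ℂ := Matrix.of (fun i m' => if R i = m' then 1 else 0) with hQ
  have hfact2 : M.submatrix R id = Q * M := by
    ext i j
    rw [Matrix.mul_apply]
    rw [Finset.sum_eq_single (R i)]
    · simp [hQ]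
    · intro b _ hb; simp [hQ, Ne.symm hb]
    · simp
  have h3 : (M.submatrix R id).rank ≤ M.rank := by
    rw [hfact2]; exact Matrix.rank_mul_le_right _ _
  omega

end Curve

section Glue

/-- Cast of an integer vector to a rational vector. -/
private def ιQ {n : ℕ} : (Fin n → ℤ) → (Fin n → ℚ) := fun I m => (I m : ℚ)

private lemma ιQ_inj {n : ℕ} : Function.Injective (ιQ (n := n)) := by
  intro I I' h
  funext m
  simpa [ιQ] using congrFun h m

lemma exists_point_rank_ge {n r : ℕ} (f : LaurentPoly n) (u : Fin r → (Fin n → ℤ))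
    (hu : ∀ i, u i ∈ f.coeff.support)
    (huind : LinearIndependent ℚ (fun i => ιQ (u i))) :
    ∃ x : Fin n → ℂˣ, r ≤ (logHessianAt f x).rank := by
  classical
  set P := f.coeff.support with hP
  obtain ⟨w, hw⟩ := exists_generic_weight P
  set dotw : (Fin n → ℤ) → ℤ := fun I => ∑ j, w j * I j with hdotw
  set Q : Finset (Fin n → ℚ) := P.image ιQ with hQdef
  set ω : (Fin n → ℚ) → ℚ := fun y => ∑ j, (w j : ℚ) * y j with hω
  have hωι : ∀ I : Fin n → ℤ, ω (ιQ I) = ((dotw I : ℤ) : ℚ) := by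
    intro I
    simp only [hω, hdotw, ιQ]
    push_cast
    rfl
  have hωinj : Set.InjOn ω (Q : Set (Fin n → ℚ)) := by
    intro y hy y' hy' hee
    rw [Finset.mem_coe, hQdef, Finset.mem_image] at hy hy'
    obtain ⟨I, hI, rfl⟩ := hy
    obtain ⟨I', hI', rfl⟩ := hy'
    rw [hωι, hωι] at hee
    have : dotw I = dotw I' := by exact_mod_cast hee
    exact congrArg ιQ (hw hI hI' this)
  -- the family u gives a candidate independent subset
  have huinj : Function.Injective (fun i => ιQ (u i)) := huind.injective
  set su : Finset (Fin n → ℚ) := Finset.image (fun i => ιQ (u i)) Finset.univ with hsu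
  have hsucoe : (su : Set (Fin n → ℚ)) = Set.range (fun i => ιQ (u i)) := by
    rw [hsu, Finset.coe_image, Finset.coe_univ, Set.image_univ]
  have hsuind : LinearIndependent ℚ ((↑) : ↥(↑su : Set (Fin n → ℚ)) → (Fin n → ℚ)) := by
    rw [hsucoe]
    exact (linearIndepOn_id_range_iff huind.injective).mpr huind
  have hsucard : su.card = r := by
    rw [hsu, Finset.card_image_of_injective _ huinj, Finset.card_univ, Fintype.card_fin]
  have hsusub : su ⊆ Q := by
    intro y hy
    rw [hsu, Finset.mem_image] at hy
    obtain ⟨i, _, rfl⟩ := hy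
    exact Finset.mem_image_of_mem ιQ (hu i)
  obtain ⟨sstar, hsQ, hscard, hsind, hmax⟩ :=
    exists_max_weight_indep Q r ω hωinj ⟨su, hsusub, hsucard, hsuind⟩
  -- enumerate sstar
  set E : Fin r ≃ ↥sstar := (finCongr hscard.symm).trans sstar.equivFin.symm with hE
  set v' : Fin r → (Fin n → ℚ) := fun i => ((E i : ↥sstar) : Fin n → ℚ) with hv'
  have hv'range : Set.range v' = (sstar : Set (Fin n → ℚ)) := by
    rw [hv']
    have h1 : (fun i => ((E i : ↥sstar) : Fin n → ℚ))
        = ((↑) : ↥sstar → (Fin n → ℚ)) ∘ E := rfl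
    rw [h1, E.surjective.range_comp, Subtype.range_coe_subtype]
    ext y
    simp
  have hv'ind : LinearIndependent ℚ v' := hsind.comp E E.injective
  have hv'inj : Function.Injective v' := hv'ind.injective
  -- integer preimages
  have hpre : ∀ i : Fin r, ∃ I : Fin n → ℤ, I ∈ P ∧ ιQ I = v' i := by
    intro i
    have : v' i ∈ Q := hsQ (E i).2
    rw [hQdef, Finset.mem_image] at this
    obtain ⟨I, hI, hIeq⟩ := this
    exact ⟨I, hI, hIeq⟩
  choose v hvP hvι using hpre
  have hvinj : Function.Injective v := by
    intro i i' h
    apply hv'inj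
    rw [← hvι, ← hvι, h]
  -- good columns
  obtain ⟨R, hR⟩ := exists_good_columns v' hv'ind
  have hdetC : (Matrix.of fun i j : Fin r => ((v i (R j) : ℤ) : ℂ)).det ≠ 0 := by
    have hmapeq : (Matrix.of fun i j : Fin r => ((v i (R j) : ℤ) : ℂ))
        = (Matrix.of fun i j : Fin r => v' i (R j)).map (algebraMap ℚ ℂ) := by
      ext i j
      simp only [Matrix.map_apply, Matrix.of_apply, ← hvι i, ιQ]
      simp
    rw [hmapeq]
    intro h
    apply hR
    have h2 : (algebraMap ℚ ℂ) ((Matrix.of fun i j : Fin r => v' i (R j)).det) = 0 := by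
      rw [RingHom.map_det, RingHom.mapMatrix_apply]
      exact h
    exact (map_eq_zero_iff _ (algebraMap ℚ ℂ).injective).mp h2
  -- exponent bookkeeping
  set s0 : ℕ := P.sup (fun I => (-dotw I).toNat) with hs0
  have hnn : ∀ I ∈ P, 0 ≤ dotw I + (s0 : ℤ) := by
    intro I hI
    have h1 : (-dotw I).toNat ≤ s0 := Finset.le_sup (f := fun I => (-dotw I).toNat) hI
    have h2 : -dotw I ≤ ((-dotw I).toNat : ℤ) := Int.self_le_toNat _
    have h3 : (((-dotw I).toNat : ℕ) : ℤ) ≤ (s0 : ℤ) := by exact_mod_cast h1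
    omega
  set eexp : (Fin n → ℤ) → ℕ := fun I => (dotw I + (s0 : ℤ)).toNat with heexp
  have he : ∀ I ∈ P, (eexp I : ℤ) = dotw I + (s0 : ℤ) := by
    intro I hI
    rw [heexp]
    exact Int.toNat_of_nonneg (hnn I hI)
  -- the key permutation property
  have hkey : ∀ φ : Fin r → (Fin n → ℤ), (∀ i, φ i ∈ P) →
      (Matrix.of fun i j : Fin r => ((φ i (R j) : ℤ) : ℂ)).det ≠ 0 →
      (∑ i, eexp (φ i)) = (∑ i, eexp (v i)) → ∃ σ : Equiv.Perm (Fin r), φ = v ∘ σ := by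
    intro φ hφP hφdet hφsum
    -- the rational casts of φ are linearly independent
    have hgind : LinearIndependent ℚ (fun i => ιQ (φ i)) := by
      rw [Fintype.linearIndependent_iff]
      intro q hq
      by_contra hcon
      push_neg at hcon
      obtain ⟨i₀, hi₀⟩ := hcon
      apply hφdet
      rw [← Matrix.exists_vecMul_eq_zero_iff]
      refine ⟨fun i => ((q i : ℚ) : ℂ), ?_, ?_⟩
      · intro h0
        exact hi₀ (by simpa using congrFun h0 i₀)
      · funext j
        have h1 : (∑ i, q i • ιQ (φ i)) (R j) = 0 := by rw [hq]; rfl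
        rw [Finset.sum_apply] at h1
        simp only [Pi.smul_apply, smul_eq_mul, ιQ] at h1
        simp only [Matrix.vecMul, dotProduct, Matrix.of_apply, Pi.zero_apply]
        have : ∑ i, ((q i : ℚ) : ℂ) * ((φ i (R j) : ℤ) : ℂ)
            = ((∑ i, q i * ((φ i (R j) : ℤ) : ℚ) : ℚ) : ℂ) := by push_cast; rfl
        rw [this, h1]
        norm_num
    have hginj : Function.Injective (fun i => ιQ (φ i)) := hgind.injective
    set t : Finset (Fin n → ℚ) := Finset.image (fun i => ιQ (φ i)) Finset.univ with ht
    have htcoe : (t : Set (Fin n → ℚ)) = Set.range (fun i => ιQ (φ i)) := by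
      rw [ht, Finset.coe_image, Finset.coe_univ, Set.image_univ]
    have htind : LinearIndependent ℚ ((↑) : ↥(↑t : Set (Fin n → ℚ)) → (Fin n → ℚ)) := by
      rw [htcoe]; exact (linearIndepOn_id_range_iff hgind.injective).mpr hgind
    have htcard : t.card = r := by
      rw [ht, Finset.card_image_of_injective _ hginj, Finset.card_univ, Fintype.card_fin]
    have htsub : t ⊆ Q := by
      intro y hy
      rw [ht, Finset.mem_image] at hy
      obtain ⟨i, _, rfl⟩ := hy
      exact Finset.mem_image_of_mem ιQ (hφP i)
    -- equal integer weights
    have hzsum : (∑ i, dotw (φ i)) = ∑ i, dotw (v i) := by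
      have h1 : (∑ i, (eexp (φ i) : ℤ)) = ∑ i, (eexp (v i) : ℤ) := by exact_mod_cast hφsum
      rw [Finset.sum_congr rfl (fun i _ => he _ (hφP i)),
        Finset.sum_congr rfl (fun i _ => he _ (hvP i)),
        Finset.sum_add_distrib, Finset.sum_add_distrib] at h1
      omega
    -- equal ω-sums
    have hsstar_img : sstar = Finset.image v' Finset.univ := by
      apply Finset.coe_injective
      rw [Finset.coe_image, Finset.coe_univ, Set.image_univ, hv'range]
    have hsum_t : ∑ y ∈ t, ω y = ((∑ i, dotw (φ i) : ℤ) : ℚ) := by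
      rw [ht, Finset.sum_image (fun i _ i' _ h => hginj h)]
      rw [Finset.sum_congr rfl (fun i _ => hωι (φ i))]
      push_cast
      rfl
    have hsum_s : ∑ y ∈ sstar, ω y = ((∑ i, dotw (v i) : ℤ) : ℚ) := by
      rw [hsstar_img, Finset.sum_image (fun i _ i' _ h => hv'inj h)]
      have : ∀ i : Fin r, ω (v' i) = ((dotw (v i) : ℤ) : ℚ) := by
        intro i; rw [← hvι i, hωι]
      rw [Finset.sum_congr rfl (fun i _ => this i)]
      push_cast
      rfl
    have hteq : t = sstar := by
      by_contra hne
      have := hmax t htsub htcard htind hne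
      rw [hsum_t, hsum_s] at this
      rw [hzsum] at this
      exact lt_irrefl _ this
    -- build the permutation
    have hπ : ∀ i : Fin r, ∃ j : Fin r, v' j = ιQ (φ i) := by
      intro i
      have hmem : ιQ (φ i) ∈ (sstar : Set (Fin n → ℚ)) := by
        rw [← hteq]
        exact_mod_cast Finset.mem_image_of_mem _ (Finset.mem_univ i)
      rw [← hv'range] at hmem
      exact hmem
    choose π hπeq using hπ
    have hπinj : Function.Injective π := by
      intro i i' h
      have : ιQ (φ i) = ιQ (φ i') := by rw [← hπeq, ← hπeq, h]
      exact hginj this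
    have hπbij : Function.Bijective π := Finite.injective_iff_bijective.mp hπinj
    refine ⟨Equiv.ofBijective π hπbij, ?_⟩
    funext i
    have : ιQ (φ i) = ιQ (v (π i)) := by rw [← hπeq i, ← hvι (π i)]
    exact ιQ_inj this
  -- the polynomial determinant is nonzero
  have hPM := det_poly_ne_zero P (fun I => f.coeff I) (fun I hI => Finsupp.mem_support_iff.mp hI)
    eexp R v hvP hvinj hdetC hkey
  -- pick a good evaluation point
  obtain ⟨z, hzeval⟩ : ∃ z : ℂ, (((Matrix.of fun i j : Fin r =>
      ∑ I ∈ P, C ((f.coeff I : ℂ) * (I (R i) : ℂ) * (I (R j) : ℂ)) * X ^ eexp I).det) * X).eval z ≠ 0 := by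
    by_contra hcon
    push_neg at hcon
    have : ((Matrix.of fun i j : Fin r =>
        ∑ I ∈ P, C ((f.coeff I : ℂ) * (I (R i) : ℂ) * (I (R j) : ℂ)) * X ^ eexp I).det) * X = 0 :=
      Polynomial.funext (fun z => by rw [hcon z]; simp)
    exact mul_ne_zero hPM Polynomial.X_ne_zero this
  rw [Polynomial.eval_mul, Polynomial.eval_X] at hzeval
  have hdetz : (((Matrix.of fun i j : Fin r =>
      ∑ I ∈ P, C ((f.coeff I : ℂ) * (I (R i) : ℂ) * (I (R j) : ℂ)) * X ^ eexp I).det)).eval z ≠ 0 :=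
    fun h => hzeval (by rw [h, zero_mul])
  have hz0 : z ≠ 0 := fun h => hzeval (by rw [h, mul_zero])
  set tz : ℂˣ := Units.mk0 z hz0 with htz
  set x : Fin n → ℂˣ := fun i => tz ^ w i with hx
  refine ⟨x, ?_⟩
  apply rank_ge_of_submatrix _ R
  -- relate the evaluated polynomial matrix with the submatrix
  have hentry : ∀ i j : Fin r,
      (∑ I ∈ P, C ((f.coeff I : ℂ) * (I (R i) : ℂ) * (I (R j) : ℂ)) * X ^ eexp I).eval z
        = z ^ ((s0 : ℤ)) * ((logHessianAt f x).submatrix R R i j) := by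
    intro i j
    rw [Polynomial.eval_finset_sum]
    have hsub : (logHessianAt f x).submatrix R R i j
        = ∑ I ∈ P, f.coeff I * (I (R i) : ℂ) * (I (R j) : ℂ) * ((tz : ℂ) ^ (dotw I)) := by
      have : (logHessianAt f x).submatrix R R i j
          = tEval x (thetaDeriv (R j) (thetaDeriv (R i) f)) := rfl
      rw [this, hx]
      exact tEval_theta2_curve f w tz (R i) (R j)
    rw [hsub, Finset.mul_sum]
    apply Finset.sum_congr rfl
    intro I hI
    rw [Polynomial.eval_mul, Polynomial.eval_C, Polynomial.eval_pow, Polynomial.eval_X]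
    have hzp : z ^ (eexp I) = z ^ ((s0 : ℤ)) * z ^ (dotw I) := by
      rw [← zpow_natCast z (eexp I), he I hI, zpow_add₀ hz0, mul_comm]
    rw [hzp]
    have : ((tz : ℂ) ^ (dotw I)) = z ^ (dotw I) := by rw [htz]; rfl
    rw [this]
    ring
  have hmapdet : ((Matrix.of fun i j : Fin r =>
      ∑ I ∈ P, C ((f.coeff I : ℂ) * (I (R i) : ℂ) * (I (R j) : ℂ)) * X ^ eexp I).map
        (Polynomial.evalRingHom z)).det
      = (((Matrix.of fun i j : Fin r =>
      ∑ I ∈ P, C ((f.coeff I : ℂ) * (I (R i) : ℂ) * (I (R j) : ℂ)) * X ^ eexp I).det)).eval z :=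
    (RingHom.map_det (Polynomial.evalRingHom z) _).symm
  have hmeq : ((Matrix.of fun i j : Fin r =>
      ∑ I ∈ P, C ((f.coeff I : ℂ) * (I (R i) : ℂ) * (I (R j) : ℂ)) * X ^ eexp I).map
        (Polynomial.evalRingHom z))
      = (z ^ ((s0 : ℤ))) • ((logHessianAt f x).submatrix R R) := by
    ext i j
    simp only [Matrix.map_apply, Matrix.of_apply, Polynomial.coe_evalRingHom,
      Matrix.smul_apply, smul_eq_mul]
    exact hentry i j
  intro hdet0
  apply hdetz
  rw [← hmapdet, hmeq, Matrix.det_smul, hdet0, mul_zero]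

end Glue

section Main

private lemma rat_clear_denoms {n : ℕ} (μ : Fin n → ℚ) :
    ∃ d : ℤ, d ≠ 0 ∧ ∃ lam : Fin n → ℤ, ∀ m, (lam m : ℚ) = (d : ℚ) * μ m := by
  classical
  set den : ℕ := ∏ m, (μ m).den with hden
  have hdenpos : 0 < den := Finset.prod_pos (fun m _ => (μ m).pos)
  refine ⟨(den : ℤ), by exact_mod_cast hdenpos.ne', ?_⟩
  have hint : ∀ m, ∃ z : ℤ, (z : ℚ) = ((den : ℤ) : ℚ) * μ m := by
    intro m
    obtain ⟨c, hc⟩ : ((μ m).den : ℕ) ∣ den :=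
      Finset.dvd_prod_of_mem (fun m => (μ m).den) (Finset.mem_univ m)
    have hq : ((μ m).den : ℚ) * μ m = (μ m).num := by
      have hne : ((μ m).den : ℚ) ≠ 0 := by exact_mod_cast (μ m).pos.ne'
      have h := Rat.num_div_den (μ m)
      rw [div_eq_iff hne] at h
      rw [mul_comm]
      exact h.symm
    refine ⟨c * (μ m).num, ?_⟩
    push_cast [hc]
    rw [mul_comm ((μ m).den : ℚ) (c : ℚ), mul_assoc, hq]
  choose lam hlam using hint
  exact ⟨lam, hlam⟩

/-- **Remark 3.5 (diagonal vector fields tangent to the fibers of `L_f`).**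
If `f ∈ S_n` (`n ≥ 2`) has vanishing logarithmic Hessian and `L_f` has generic rank
`n − k` with `1 ≤ k ≤ n − 1`, then there exist `k` linearly independent integer vectors
`λ^{(1)}, …, λ^{(k)} ∈ ℤⁿ` such that `Σ_j λ^{(i)}_j · θ_j(θ_m f) = 0` in `S_n` for all
`i`, `m`; i.e. the vector fields `X_i = Σ_j λ^{(i)}_j x_j ∂/∂x_j` annihilate every
component `x_m f_{x_m}` of `L_f` and hence are tangent to its fibers. -/
theorem diagonal_vector_fields_tangent_to_fibers (n k : ℕ) (hn : 2 ≤ n) (hk : 1 ≤ k)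
    (hkn : k ≤ n - 1) (f : LaurentPoly n)
    (hvanish : (logHessian f).det = 0)
    (hrank_le : ∀ x : Fin n → ℂˣ, (logHessianAt f x).rank ≤ n - k)
    (hrank_eq : ∃ x : Fin n → ℂˣ, (logHessianAt f x).rank = n - k) :
    ∃ lam : Fin k → (Fin n → ℤ), LinearIndependent ℤ lam ∧
      ∀ (i : Fin k) (m : Fin n),
        (∑ j : Fin n, (lam i j : ℂ) • thetaDeriv j (thetaDeriv m f)) = 0 := by
  classical
  -- Step 1: the span of the (rational casts of the) support has dimension ≤ n - k
  have hdim : Module.finrank ℚ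
      (Submodule.span ℚ (ιQ '' ((f.coeff.support : Set (Fin n → ℤ))))) ≤ n - k := by
    by_contra hcon
    push_neg at hcon
    set r : ℕ := n - k + 1 with hr
    have hrle : r ≤ Module.finrank ℚ
        (Submodule.span ℚ (ιQ '' ((f.coeff.support : Set (Fin n → ℤ))))) := hcon
    -- choose an independent subset of size r in the image of the support
    obtain ⟨b, hbsub, hbspan, hbind⟩ :=
      exists_linearIndependent ℚ (ιQ '' ((f.coeff.support : Set (Fin n → ℤ))))
    have hbfin : b.Finite :=
      (((f.coeff.support : Set (Fin n → ℤ)).toFinite).image ιQ).subset hbsub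
    haveI := hbfin.fintype
    have hbcard : Module.finrank ℚ (Submodule.span ℚ b) = b.toFinset.card := by
      have := finrank_span_set_eq_card (R := ℚ) (s := b) hbind
      simpa using this
    have hrb : r ≤ b.toFinset.card := by
      rw [← hbcard, hbspan]
      exact hrle
    obtain ⟨c, hcsub, hccard⟩ := Finset.exists_subset_card_eq hrb
    have hcind : LinearIndependent ℚ ((↑) : ↥(↑c : Set (Fin n → ℚ)) → (Fin n → ℚ)) := by
      apply LinearIndepOn.mono (v := id) hbind
      intro y hy
      have := hcsub hy
      rwa [Set.mem_toFinset] at this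
    set Ec : Fin r ≃ ↥c := (finCongr hccard.symm).trans c.equivFin.symm with hEc
    set u' : Fin r → (Fin n → ℚ) := fun i => ((Ec i : ↥c) : Fin n → ℚ) with hu'
    have hu'ind : LinearIndependent ℚ u' := hcind.comp Ec Ec.injective
    have hpre : ∀ i : Fin r, ∃ I : Fin n → ℤ, I ∈ f.coeff.support ∧ ιQ I = u' i := by
      intro i
      have h1 : u' i ∈ b := by
        have := (Ec i).2
        have h2 := hcsub this
        rwa [Set.mem_toFinset] at h2
      have h2 : u' i ∈ ιQ '' ((f.coeff.support : Set (Fin n → ℤ))) := hbsub h1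
      obtain ⟨I, hI, hIeq⟩ := h2
      exact ⟨I, hI, hIeq⟩
    choose u huP huι using hpre
    have huind : LinearIndependent ℚ (fun i => ιQ (u i)) := by
      have : (fun i => ιQ (u i)) = u' := funext huι
      rw [this]
      exact hu'ind
    obtain ⟨x, hx⟩ := exists_point_rank_ge f u huP huind
    have := hrank_le x
    omega
  -- Step 2: find k independent integer vectors orthogonal to the support
  set A2 : Matrix (↥f.coeff.support) (Fin n) ℚ :=
    Matrix.of (fun I m => (((I : Fin n → ℤ)) m : ℚ)) with hA2
  set L := A2.mulVecLin with hL
  have hrange : Set.range A2 = ιQ '' ((f.coeff.support : Set (Fin n → ℤ))) := by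
    ext y
    constructor
    · rintro ⟨I, rfl⟩
      exact ⟨(I : Fin n → ℤ), I.2, rfl⟩
    · rintro ⟨I, hI, rfl⟩
      exact ⟨⟨I, hI⟩, rfl⟩
  have hrankA2 : A2.rank ≤ n - k := by
    have h1 : A2ᵀ.rank = A2.rank := Matrix.rank_transpose A2
    have h2 : A2ᵀ.rank = Module.finrank ℚ (Submodule.span ℚ (Set.range A2ᵀᵀ)) :=
      Matrix.rank_eq_finrank_span_cols A2ᵀ
    rw [Matrix.transpose_transpose, hrange] at h2
    rw [← h1, h2]
    exact hdim
  have hkerdim : k ≤ Module.finrank ℚ (LinearMap.ker L) := by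
    have h1 := L.finrank_range_add_finrank_ker
    have h2 : Module.finrank ℚ (Fin n → ℚ) = n := by
      simp [Module.finrank_pi]
    have h3 : Module.finrank ℚ (LinearMap.range L) = A2.rank := rfl
    rw [h2, h3] at h1
    have : 1 ≤ n - k := by omega
    omega
  set bK := Module.finBasis ℚ (LinearMap.ker L) with hbK
  set μ : Fin k → (Fin n → ℚ) :=
    fun i => ((bK (Fin.castLE hkerdim i) : LinearMap.ker L) : Fin n → ℚ) with hμ
  have hμind : LinearIndependent ℚ μ := by
    have h1 : LinearIndependent ℚ (fun i : Fin k => bK (Fin.castLE hkerdim i)) :=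
      bK.linearIndependent.comp (Fin.castLE hkerdim) (Fin.castLE_injective hkerdim)
    exact h1.map' (LinearMap.ker L).subtype (Submodule.ker_subtype _)
  have hμker : ∀ i, A2.mulVec (μ i) = 0 := by
    intro i
    exact (bK (Fin.castLE hkerdim i)).2
  have hμorth : ∀ i, ∀ I ∈ f.coeff.support, ∑ m, ((I m : ℚ)) * μ i m = 0 := by
    intro i I hI
    have h1 := congrFun (hμker i) ⟨I, hI⟩
    simpa [Matrix.mulVec, dotProduct, hA2] using h1
  -- clear denominators
  have hclr : ∀ i : Fin k, ∃ d : ℤ, d ≠ 0 ∧ ∃ lam : Fin n → ℤ,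
      ∀ m, (lam m : ℚ) = (d : ℚ) * μ i m := fun i => rat_clear_denoms (μ i)
  choose d hd lam hlam using hclr
  have hlamorth : ∀ i, ∀ E ∈ f.coeff.support, ∑ j, lam i j * E j = 0 := by
    intro i E hE
    have h1 : ((∑ j, lam i j * E j : ℤ) : ℚ) = ∑ j, (lam i j : ℚ) * (E j : ℚ) := by
      push_cast
      rfl
    have h2 : ∑ j, (lam i j : ℚ) * (E j : ℚ) = (d i : ℚ) * ∑ j, (E j : ℚ) * μ i j := by
      rw [Finset.mul_sum]
      apply Finset.sum_congr rfl
      intro j _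
      rw [hlam i j]
      ring
    have h3 := hμorth i E hE
    have : ((∑ j, lam i j * E j : ℤ) : ℚ) = 0 := by
      rw [h1, h2, h3, mul_zero]
    exact_mod_cast this
  have hlamind : LinearIndependent ℤ lam := by
    rw [Fintype.linearIndependent_iff]
    intro g hg
    have hμi := Fintype.linearIndependent_iff.mp hμind
    have hsum : (∑ i, ((g i * d i : ℤ) : ℚ) • μ i) = 0 := by
      funext m
      simp only [Finset.sum_apply, Pi.zero_apply, Pi.smul_apply, smul_eq_mul]
      have h1 : ∀ i, (((g i * d i : ℤ) : ℚ)) * μ i m = (g i : ℚ) * (lam i m : ℚ) := by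
        intro i
        rw [hlam i m]
        push_cast
        ring
      rw [Finset.sum_congr rfl (fun i _ => h1 i)]
      have h2 : ((∑ i, g i • lam i) m : ℚ) = 0 := by rw [hg]; simp
      rw [Finset.sum_apply] at h2
      simp only [Pi.smul_apply, smul_eq_mul] at h2
      push_cast at h2
      exact h2
    intro i
    have := hμi (fun i => ((g i * d i : ℤ) : ℚ)) hsum i
    have hgd : g i * d i = 0 := by exact_mod_cast this
    rcases mul_eq_zero.mp hgd with h | h
    · exact h
    · exact absurd h (hd i)
  refine ⟨lam, hlamind, ?_⟩
  intro i m
  exact sum_smul_theta2_eq_zero f (lam i) (hlamorth i) m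

end Main
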